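/- Let q = (τ⁺, τ⁻, ℘) be a couple and let m, n be nodes of q. Then the following are equivalent: (i) m ∼ n; (ii) ζ_m = ζ_n for every additive abelian group G and every ζ ∈ D^q(G); (iii) η_m = η_n for every additive abelian group G and every η ∈ C^q(G). -/

import Mathlib

noncomputable section
open scoped Classical

namespace WickNLS

/-! ## Ternary trees, signed ternary trees and couples -/

/-- Ternary trees: every non-leaf (branching) node has three ordered children. -/
inductive TTree : Type
  | leaf : TTree
  | node : TTree → TTree → TTree → TTree
deriving DecidableEq

namespace TTree

/-- The order of a ternary tree: the number of its branching nodes. -/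
def order : TTree → ℕ
  | leaf => 0
  | node a b c => order a + order b + order c + 1

/-- The subtree of `t` at the path `p` from the root (child indices `0,1,2` denote the
left, middle and right child, respectively), if `p` is a valid path. -/
def sub : TTree → List (Fin 3) → Option TTree
  | t, [] => some t
  | leaf, _ :: _ => none
  | node a b c, i :: p => sub (if i = 0 then a else if i = 1 then b else c) p

/-- `p` is (the path of) a node of `t`. -/
def valid (t : TTree) (p : List (Fin 3)) : Prop := (t.sub p).isSome = true

/-- `p` is (the path of) a leaf node of `t`. -/
def isLeaf (t : TTree) (p : List (Fin 3)) : Prop := t.sub p = some leaf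

/-- `p` is (the path of) a branching node of `t`. -/
def isBranch (t : TTree) (p : List (Fin 3)) : Prop := ∃ a b c, t.sub p = some (node a b c)

/-- Replace the subtree at the path `p` by `r`. -/
def replace : TTree → List (Fin 3) → TTree → TTree
  | _, [], r => r
  | leaf, _ :: _, _ => leaf
  | node a b c, i :: p, r =>
      if i = 0 then node (replace a p r) b c
      else if i = 1 then node a (replace b p r) c
      else node a b (replace c p r)

end TTree

/-- The sign `ι` of the node at path `p` of a signed ternary tree whose root carries the
sign `σ`: because `ι_{b[j]} = ι_b · (-1)^(j+1)`, the sign is kept by the two outer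
children and flipped by the middle child. -/
def nodeSign (σ : ℤ) (p : List (Fin 3)) : ℤ := σ * (-1) ^ (p.count (1 : Fin 3))

/-- Nodes of a couple: `(true, p)` is the node at path `p` of the positive tree `τ⁺`,
and `(false, p)` is the node at path `p` of the negative tree `τ⁻`. -/
abbrev CNode : Type := Bool × List (Fin 3)

/-- The (raw data of a) couple `(τ⁺, τ⁻, ℘)`: a positive tree `tp`, a negative tree `tm`,
the pairing `pr` sending each leaf of `tp` to its partner leaf of `tm`, and the inverse
pairing `pl`. -/
structure Couple : Type where
  tp : TTree
  tm : TTree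
  pr : List (Fin 3) → List (Fin 3)
  pl : List (Fin 3) → List (Fin 3)

namespace Couple

/-- The tree of the given side of the couple (`true` ↦ positive tree). -/
def tree (q : Couple) (b : Bool) : TTree := if b then q.tp else q.tm

/-- The sign of a node of a couple (the root of `τ⁺` has sign `+1`, that of `τ⁻` has
sign `-1`). -/
def sign (x : CNode) : ℤ := nodeSign (if x.1 then 1 else -1) x.2

/-- `x` is a node of the couple `q`. -/
def isNode (q : Couple) (x : CNode) : Prop := (q.tree x.1).valid x.2

/-- `x` is a leaf of the couple `q`. -/
def isLeafN (q : Couple) (x : CNode) : Prop := (q.tree x.1).isLeaf x.2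

/-- `x` is a branching node of the couple `q`. -/
def isBranchN (q : Couple) (x : CNode) : Prop := (q.tree x.1).isBranch x.2

/-- Well-formedness of a couple: the two trees have the same order; `pr` is a bijection
(with inverse `pl`) from the leaves of the positive tree onto the leaves of the negative
tree, pairing leaves of opposite signs.  The fields `pr_norm` and `pl_norm` normalize the
(irrelevant) values of `pr` and `pl` off their domains, so that equality of raw couples
is equality of couples. -/
structure IsCouple (q : Couple) : Prop where
  order_eq : q.tp.order = q.tm.order
  pr_leaf : ∀ l, q.tp.isLeaf l → q.tm.isLeaf (q.pr l)
  pl_leaf : ∀ l, q.tm.isLeaf l → q.tp.isLeaf (q.pl l)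
  pl_pr : ∀ l, q.tp.isLeaf l → q.pl (q.pr l) = l
  pr_pl : ∀ l, q.tm.isLeaf l → q.pr (q.pl l) = l
  sign_pr : ∀ l, q.tp.isLeaf l → sign (false, q.pr l) = - sign (true, l)
  pr_norm : ∀ l, ¬ q.tp.isLeaf l → q.pr l = []
  pl_norm : ∀ l, ¬ q.tm.isLeaf l → q.pl l = []

/-- The set `A_p` attached to the leaf pair `p = {(true, l), (false, q.pr l)}`
(indexed by the leaf `l` of the positive tree): the set of all nodes `m` of `q` with
`m ⪰ (true, l)` or `m ⪰ (false, q.pr l)`, i.e. all weak ancestors of the two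
paired leaves. -/
def pairSet (q : Couple) (l : List (Fin 3)) : Set CNode :=
  {x | (x.1 = true ∧ x.2 <+: l) ∨ (x.1 = false ∧ x.2 <+: q.pr l)}

/-- Two nodes `x, y` of `q` are conjugate, `x ∼ y`, if for every leaf pair `p ∈ ℘`
either both belong to `A_p` or neither does. -/
def Conj (q : Couple) (x y : CNode) : Prop :=
  ∀ l, q.tp.isLeaf l →
    ((x ∈ q.pairSet l ∧ y ∈ q.pairSet l) ∨ (x ∉ q.pairSet l ∧ y ∉ q.pairSet l))

/-- The leaf of the leaf pair indexed by the `tp`-leaf `l` carrying the sign `+1`. -/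
def posLeaf (q : Couple) (l : List (Fin 3)) : CNode :=
  if sign (true, l) = 1 then ((true, l) : CNode) else ((false, q.pr l) : CNode)

/-- The leaf of the leaf pair indexed by the `tp`-leaf `l` carrying the sign `-1`. -/
def negLeaf (q : Couple) (l : List (Fin 3)) : CNode :=
  if sign (true, l) = 1 then ((false, q.pr l) : CNode) else ((true, l) : CNode)

end Couple

/-- `x` is a weak ancestor of `y` (i.e. `x ⪰ y` fails ... this states `y ⪯ x` in the
subtree order: `y` lies in the subtree rooted at `x`), as nodes of a couple. -/
def anc (x y : CNode) : Prop := x.1 = y.1 ∧ x.2 <+: y.2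

/-- The indicator `1_{x ⪰ y}` (i.e. `x` is a weak ancestor of `y`), with values in `ℤ`. -/
def ind1 (x y : CNode) : ℤ := if anc x y then 1 else 0

/-! ## Decorations -/

section Deco

variable {G : Type*} [AddCommGroup G]

/-- `ζ` is a `𝒟`-decoration of the ternary tree `t` (whose root carries sign `σ`),
valued in the additive abelian group `G`:  `ι_b ζ_b = ∑_{n : parent n = b} ι_n ζ_n`
for every branching node `b`. -/
def IsDDecoT (t : TTree) (σ : ℤ) (ζ : List (Fin 3) → G) : Prop :=
  ∀ p, t.isBranch p →
    nodeSign σ p • ζ p = ∑ j : Fin 3, nodeSign σ (p ++ [j]) • ζ (p ++ [j])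

/-- `η` is a `𝒞`-decoration of the ternary tree `t` valued in `G`:
`η_b = ∑_{n : parent n = b} η_n` for every branching node `b`. -/
def IsCDecoT (t : TTree) (η : List (Fin 3) → G) : Prop :=
  ∀ p, t.isBranch p → η p = ∑ j : Fin 3, η (p ++ [j])

/-- `ζ ∈ 𝒟^q(G)`: a map on the nodes of the couple `q` restricting to `𝒟`-decorations of
both trees and taking equal values on the two leaves of every leaf pair. -/
def IsDDeco (q : Couple) (ζ : CNode → G) : Prop :=
  IsDDecoT q.tp 1 (fun p => ζ (true, p)) ∧
  IsDDecoT q.tm (-1) (fun p => ζ (false, p)) ∧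
  ∀ l, q.tp.isLeaf l → ζ (true, l) = ζ (false, q.pr l)

/-- `η ∈ 𝒞^q(G)`: a map on the nodes of the couple `q` restricting to `𝒞`-decorations of
both trees and taking equal values on the two leaves of every leaf pair. -/
def IsCDeco (q : Couple) (η : CNode → G) : Prop :=
  IsCDecoT q.tp (fun p => η (true, p)) ∧
  IsCDecoT q.tm (fun p => η (false, p)) ∧
  ∀ l, q.tp.isLeaf l → η (true, l) = η (false, q.pr l)

/-- `ξ ∈ 𝒟^{τ*}(G)`: a map on the nodes of `q` restricting to a `𝒟`-decoration of each of
the two trees (with no constraint at leaf pairs). -/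
def IsDDecoPair (q : Couple) (ξ : CNode → G) : Prop :=
  IsDDecoT q.tp 1 (fun p => ξ (true, p)) ∧
  IsDDecoT q.tm (-1) (fun p => ξ (false, p))

end Deco


/-! ## Auxiliary machinery for the proof of Statement 3 -/

namespace TTree

lemma sub_append (t : TTree) (p r : List (Fin 3)) :
    t.sub (p ++ r) = (t.sub p).bind (fun s => s.sub r) := by
  induction p generalizing t with
  | nil => simp [sub]
  | cons i p ih =>
    cases t with
    | leaf => simp [sub]
    | node a b c => rw [List.cons_append]; simp only [sub, ih]

/-- The list of (relative paths of) the leaves of a ternary tree. -/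
def leavesRel : TTree → List (List (Fin 3))
  | leaf => [[]]
  | node a b c => (leavesRel a).map (List.cons 0) ++ (leavesRel b).map (List.cons 1)
      ++ (leavesRel c).map (List.cons 2)

lemma mem_leavesRel : ∀ (t : TTree) (l : List (Fin 3)), l ∈ leavesRel t ↔ t.isLeaf l
  | leaf, l => by
    constructor
    · rintro h; simp [leavesRel] at h; simp [h, isLeaf, sub]
    · intro h; cases l with
      | nil => simp [leavesRel]
      | cons i l => simp [isLeaf, sub] at h
  | node a b c, l => by
    cases l with
    | nil => simp [leavesRel, isLeaf, sub]
    | cons i l =>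
      simp only [leavesRel, List.mem_append, List.mem_map, isLeaf, sub]
      constructor
      · rintro ((⟨r, hr, h⟩ | ⟨r, hr, h⟩) | ⟨r, hr, h⟩) <;>
          obtain ⟨rfl, rfl⟩ : _ ∧ r = l := by simpa using h
        · simpa [isLeaf] using (mem_leavesRel a r).1 hr
        · simpa [isLeaf] using (mem_leavesRel b r).1 hr
        · simpa [isLeaf] using (mem_leavesRel c r).1 hr
      · intro h
        fin_cases i
        · exact Or.inl (Or.inl ⟨l, (mem_leavesRel a l).2 (by simpa [isLeaf] using h), rfl⟩)
        · exact Or.inl (Or.inr ⟨l, (mem_leavesRel b l).2 (by simpa [isLeaf] using h), rfl⟩)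
        · exact Or.inr ⟨l, (mem_leavesRel c l).2 (by simpa [isLeaf] using h), rfl⟩

lemma leavesRel_nodup : ∀ t : TTree, (leavesRel t).Nodup
  | leaf => by simp [leavesRel]
  | node a b c => by
    have ha := leavesRel_nodup a
    have hb := leavesRel_nodup b
    have hc := leavesRel_nodup c
    have inj : ∀ i : Fin 3, Function.Injective (List.cons i) := by
      intro i x y h; simpa using h
    simp only [leavesRel, List.nodup_append]
    refine ⟨⟨ha.map (inj 0), hb.map (inj 1), ?_⟩, hc.map (inj 2), ?_⟩
    · rintro x hx _ hy rfl
      simp only [List.mem_map] at hx hy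
      obtain ⟨r, -, rfl⟩ := hx; obtain ⟨s, -, h⟩ := hy
      simp at h
    · rintro x hx _ hy rfl
      simp only [List.mem_append, List.mem_map] at hx hy
      obtain ⟨s, -, h⟩ := hy
      rcases hx with ⟨r, -, rfl⟩ | ⟨r, -, rfl⟩ <;> simp at h

lemma branch_ne_leaf {t : TTree} {p l : List (Fin 3)} (hp : t.isBranch p)
    (hl : t.isLeaf l) : p ≠ l := by
  rintro rfl
  obtain ⟨a, b, c, h⟩ := hp
  rw [hl] at h
  simp at h

lemma leaf_prefix_leaf {t : TTree} {l l' : List (Fin 3)} (h : t.isLeaf l)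
    (h' : t.isLeaf l') (hp : l <+: l') : l = l' := by
  obtain ⟨r, rfl⟩ := hp
  rw [isLeaf, sub_append, h] at h'
  cases r with
  | nil => simp
  | cons i r => simp [sub] at h'

end TTree

section TreeSum

variable {G : Type*} [AddCommGroup G]

lemma csum_list {t : TTree} {g : List (Fin 3) → G} (hg : IsCDecoT t g) :
    ∀ (s : TTree) (p : List (Fin 3)), t.sub p = some s →
      g p = ((s.leavesRel).map (fun r => g (p ++ r))).sum
  | .leaf, p, hp => by simp [TTree.leavesRel]
  | .node a b c, p, hp => by
    have hb : t.isBranch p := ⟨a, b, c, hp⟩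
    have hs : ∀ j : Fin 3, t.sub (p ++ [j]) =
        some (if j = 0 then a else if j = 1 then b else c) := by
      intro j; rw [TTree.sub_append, hp]; simp [TTree.sub]
    rw [hg p hb, Fin.sum_univ_three,
        csum_list hg a (p ++ [0]) (by simpa using hs 0),
        csum_list hg b (p ++ [1]) (by simpa using hs 1),
        csum_list hg c (p ++ [2]) (by simpa using hs 2)]
    simp [TTree.leavesRel, List.map_map, Function.comp_def, List.append_assoc, add_assoc]

lemma csum {t : TTree} {g : List (Fin 3) → G} (hg : IsCDecoT t g)
    (p : List (Fin 3)) (hp : t.valid p) :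
    g p = ∑ l ∈ (t.leavesRel).toFinset, if p <+: l then g l else 0 := by
  obtain ⟨s, hs⟩ := Option.isSome_iff_exists.1 hp
  have h1 := csum_list hg s p hs
  have h2 : ((s.leavesRel).map (fun r => g (p ++ r))).sum
      = ∑ l ∈ ((s.leavesRel).map (p ++ ·)).toFinset, g l := by
    rw [List.sum_toFinset _ ((TTree.leavesRel_nodup s).map
      (List.append_right_injective p)), List.map_map]
    rfl
  have hset : ((s.leavesRel).map (p ++ ·)).toFinset
      = (t.leavesRel).toFinset.filter (fun l => p <+: l) := by
    ext l
    simp only [List.mem_toFinset, Finset.mem_filter, List.mem_map,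
      TTree.mem_leavesRel]
    constructor
    · rintro ⟨r, hr, rfl⟩
      refine ⟨?_, r, rfl⟩
      rw [TTree.isLeaf, TTree.sub_append, hs]
      exact hr
    · rintro ⟨hl, r, rfl⟩
      refine ⟨r, ?_, rfl⟩
      rw [TTree.isLeaf, TTree.sub_append, hs] at hl
      exact hl
  rw [h1, h2, hset, Finset.sum_filter]

end TreeSum

/-! ### Sign lemmas -/

lemma nodeSign_sq {σ : ℤ} (h : σ * σ = 1) (p : List (Fin 3)) :
    nodeSign σ p * nodeSign σ p = 1 := by
  unfold nodeSign
  rw [mul_mul_mul_comm, h, one_mul, ← pow_add]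
  exact Even.neg_one_pow ⟨_, rfl⟩

lemma sign_sq (x : CNode) : Couple.sign x * Couple.sign x = 1 := by
  unfold Couple.sign
  apply nodeSign_sq
  split <;> norm_num

lemma nodeSign_children (σ : ℤ) (p : List (Fin 3)) :
    ∑ j : Fin 3, nodeSign σ (p ++ [j]) = nodeSign σ p := by
  have h0 : ([(0 : Fin 3)] : List (Fin 3)).count (1 : Fin 3) = 0 := by decide
  have h1 : ([(1 : Fin 3)] : List (Fin 3)).count (1 : Fin 3) = 1 := by decide
  have h2 : ([(2 : Fin 3)] : List (Fin 3)).count (1 : Fin 3) = 0 := by decide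
  simp only [nodeSign, Fin.sum_univ_three, List.count_append, h0, h1, h2,
    add_zero, pow_succ]
  ring

/-! ### Coefficients -/

/-- The indicator (valued in `ℤ`) of `x ∈ A_l`. -/
def cind (q : Couple) (x : CNode) (l : List (Fin 3)) : ℤ :=
  if x ∈ q.pairSet l then 1 else 0

/-- The sign `+1`/`-1` according to the tree containing `x`. -/
def eps (x : CNode) : ℤ := if x.1 then 1 else -1

/-- The coefficient of the leaf-pair value indexed by `l` in the value of a
`𝒟`-decoration at the node `x`. -/
def dco (q : Couple) (x : CNode) (l : List (Fin 3)) : ℤ :=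
  eps x * Couple.sign x * Couple.sign (true, l) * cind q x l

lemma cind_true (q : Couple) (p l : List (Fin 3)) :
    cind q (true, p) l = if p <+: l then 1 else 0 := by
  simp [cind, Couple.pairSet]

lemma cind_false (q : Couple) (p l : List (Fin 3)) :
    cind q (false, p) l = if p <+: q.pr l then 1 else 0 := by
  simp [cind, Couple.pairSet]

lemma eps_sq (x : CNode) : eps x * eps x = 1 := by
  unfold eps; split <;> norm_num

lemma dco_mul_self (q : Couple) (x : CNode) (l : List (Fin 3)) :
    dco q x l * dco q x l = cind q x l := by
  unfold dco
  have key : ∀ a b c d : ℤ, (a * b * c * d) * (a * b * c * d)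
      = ((a * a) * (b * b)) * ((c * c) * (d * d)) := by intros; ring
  rw [key, eps_sq, sign_sq, sign_sq, one_mul, one_mul, one_mul]
  unfold cind; split <;> norm_num

lemma ite_prefix_sum {p l : List (Fin 3)} (h : p ≠ l) :
    (if p <+: l then (1 : ℤ) else 0) = ∑ j : Fin 3, if p ++ [j] <+: l then (1 : ℤ) else 0 := by
  by_cases hp : p <+: l
  · obtain ⟨r, rfl⟩ := hp
    cases r with
    | nil => simp at h
    | cons j0 r' =>
      have hj : ∀ j : Fin 3, (p ++ [j] <+: p ++ j0 :: r') ↔ j = j0 := by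
        intro j
        constructor
        · rintro ⟨s, hs⟩
          have : [j] ++ s = j0 :: r' := List.append_right_injective p
            (by simpa [List.append_assoc] using hs)
          simpa using congrArg (fun u => u.head?) this
        · rintro rfl
          exact ⟨r', by simp⟩
      rw [if_pos ⟨j0 :: r', rfl⟩]
      calc (1 : ℤ) = ∑ j : Fin 3, if j = j0 then (1 : ℤ) else 0 := by
            rw [Finset.sum_ite_eq' Finset.univ j0 (fun _ => (1 : ℤ))]
            simp
        _ = _ := Finset.sum_congr rfl fun j _ => by simp only [hj j]
  · rw [if_neg hp]
    symm
    apply Finset.sum_eq_zero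
    intro j _
    rw [if_neg]
    exact fun hj => hp ((p.prefix_append [j]).trans hj)


/-! ### Couple-level machinery -/

/-- The leaves of the positive tree, indexing the leaf pairs of a couple. -/
def lvs (q : Couple) : Finset (List (Fin 3)) := (q.tp.leavesRel).toFinset

/-- The leaves of the negative tree of a couple. -/
def lvm (q : Couple) : Finset (List (Fin 3)) := (q.tm.leavesRel).toFinset

lemma mem_lvs {q : Couple} {l : List (Fin 3)} : l ∈ lvs q ↔ q.tp.isLeaf l := by
  simp [lvs, TTree.mem_leavesRel]

lemma mem_lvm {q : Couple} {l : List (Fin 3)} : l ∈ lvm q ↔ q.tm.isLeaf l := by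
  simp [lvm, TTree.mem_leavesRel]

lemma sum_pr {G : Type*} [AddCommMonoid G] {q : Couple} (hq : q.IsCouple)
    (f : List (Fin 3) → G) : ∑ L ∈ lvm q, f L = ∑ l ∈ lvs q, f (q.pr l) :=
  Finset.sum_bij' (fun L _ => q.pl L) (fun l _ => q.pr l)
    (fun L hL => mem_lvs.2 (hq.pl_leaf L (mem_lvm.1 hL)))
    (fun l hl => mem_lvm.2 (hq.pr_leaf l (mem_lvs.1 hl)))
    (fun L hL => hq.pr_pl L (mem_lvm.1 hL))
    (fun l hl => hq.pl_pr l (mem_lvs.1 hl))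
    (fun L hL => by rw [hq.pr_pl L (mem_lvm.1 hL)])

lemma sign_true (l : List (Fin 3)) : Couple.sign (true, l) = nodeSign 1 l := by
  simp [Couple.sign]

lemma sign_false (l : List (Fin 3)) : Couple.sign (false, l) = nodeSign (-1) l := by
  simp [Couple.sign]

lemma eps_true (p : List (Fin 3)) : eps (true, p) = 1 := rfl

lemma eps_false (p : List (Fin 3)) : eps (false, p) = -1 := rfl

lemma dco_true (q : Couple) (p l : List (Fin 3)) :
    dco q (true, p) l = nodeSign 1 p * (nodeSign 1 l * (if p <+: l then 1 else 0)) := by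
  rw [dco, cind_true, sign_true, sign_true, eps_true]; ring

lemma dco_false (q : Couple) (p l : List (Fin 3)) :
    dco q (false, p) l
      = -(nodeSign (-1) p * (nodeSign 1 l * (if p <+: q.pr l then 1 else 0))) := by
  rw [dco, cind_false, sign_false, sign_true, eps_false]; ring

/-! ### Evaluation of decorations at a node in terms of leaf-pair values -/

lemma eval_C {G : Type*} [AddCommGroup G] {q : Couple} (hq : q.IsCouple) {η : CNode → G}
    (hη : IsCDeco q η) (x : CNode) (hx : q.isNode x) :
    η x = ∑ l ∈ lvs q, cind q x l • η (true, l) := by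
  obtain ⟨b, p⟩ := x
  cases b with
  | true =>
    have hv : q.tp.valid p := by simpa [Couple.isNode, Couple.tree] using hx
    refine (csum hη.1 p hv).trans (Finset.sum_congr rfl fun l hl => ?_)
    rw [cind_true]
    by_cases hcl : p <+: l <;> simp [hcl]
  | false =>
    have hv : q.tm.valid p := by simpa [Couple.isNode, Couple.tree] using hx
    have h1 : η (false, p) = ∑ L ∈ lvm q, if p <+: L then η (false, L) else 0 :=
      csum hη.2.1 p hv
    rw [h1, sum_pr hq]
    refine Finset.sum_congr rfl fun l hl => ?_
    rw [cind_false, ← hη.2.2 l (mem_lvs.1 hl)]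
    by_cases hcl : p <+: q.pr l <;> simp [hcl]

lemma eval_D {G : Type*} [AddCommGroup G] {q : Couple} (hq : q.IsCouple) {ζ : CNode → G}
    (hζ : IsDDeco q ζ) (x : CNode) (hx : q.isNode x) :
    ζ x = ∑ l ∈ lvs q, dco q x l • ζ (true, l) := by
  obtain ⟨b, p⟩ := x
  cases b with
  | true =>
    have hv : q.tp.valid p := by simpa [Couple.isNode, Couple.tree] using hx
    have hg : IsCDecoT q.tp (fun r => nodeSign 1 r • ζ (true, r)) := hζ.1
    have h1 : nodeSign 1 p • ζ (true, p)
        = ∑ l ∈ lvs q, if p <+: l then nodeSign 1 l • ζ (true, l) else 0 :=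
      csum hg p hv
    have h2 : ζ (true, p) = nodeSign 1 p • (nodeSign 1 p • ζ (true, p)) := by
      rw [smul_smul, nodeSign_sq (by norm_num), one_smul]
    rw [h2, h1, Finset.smul_sum]
    refine Finset.sum_congr rfl fun l hl => ?_
    rw [dco_true]
    by_cases hcl : p <+: l
    · rw [if_pos hcl, if_pos hcl, smul_smul, mul_one]
    · rw [if_neg hcl, if_neg hcl, smul_zero, mul_zero, mul_zero, zero_smul]
  | false =>
    have hv : q.tm.valid p := by simpa [Couple.isNode, Couple.tree] using hx
    have hg : IsCDecoT q.tm (fun r => nodeSign (-1) r • ζ (false, r)) := hζ.2.1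
    have h1 : nodeSign (-1) p • ζ (false, p)
        = ∑ L ∈ lvm q, if p <+: L then nodeSign (-1) L • ζ (false, L) else 0 :=
      csum hg p hv
    have h2 : ζ (false, p) = nodeSign (-1) p • (nodeSign (-1) p • ζ (false, p)) := by
      rw [smul_smul, nodeSign_sq (by norm_num), one_smul]
    rw [h2, h1, sum_pr hq, Finset.smul_sum]
    refine Finset.sum_congr rfl fun l hl => ?_
    have hle := mem_lvs.1 hl
    have hsp : nodeSign (-1) (q.pr l) = - nodeSign 1 l := by
      have h := hq.sign_pr l hle
      rwa [sign_false, sign_true] at h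
    rw [dco_false]
    by_cases hcl : p <+: q.pr l
    · rw [if_pos hcl, if_pos hcl, hsp, ← hζ.2.2 l hle, mul_one, smul_smul]
      congr 1
      ring
    · rw [if_neg hcl, if_neg hcl, smul_zero, mul_zero, mul_zero, neg_zero, zero_smul]

/-! ### Special decorations -/

lemma prefix_leaf_iff {q : Couple} {l l0 : List (Fin 3)}
    (hl : q.tp.isLeaf l) (hl0 : q.tp.isLeaf l0) : l <+: l0 ↔ l = l0 :=
  ⟨fun h => TTree.leaf_prefix_leaf hl hl0 h, fun h => h ▸ List.prefix_refl l⟩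

lemma prefix_pr_iff {q : Couple} (hq : q.IsCouple) {l l0 : List (Fin 3)}
    (hl : q.tp.isLeaf l) (hl0 : q.tp.isLeaf l0) : q.pr l <+: q.pr l0 ↔ l = l0 := by
  constructor
  · intro h
    have h3 := TTree.leaf_prefix_leaf (hq.pr_leaf l hl) (hq.pr_leaf l0 hl0) h
    have h4 := congrArg q.pl h3
    rwa [hq.pl_pr l hl, hq.pl_pr l0 hl0] at h4
  · rintro rfl; exact List.prefix_refl _

lemma isCDeco_cind {q : Couple} (hq : q.IsCouple) {l0 : List (Fin 3)}
    (hl0 : q.tp.isLeaf l0) : IsCDeco q (fun x => (cind q x l0 : ℤ)) := by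
  refine ⟨?_, ?_, ?_⟩
  · intro p hp
    show cind q (true, p) l0 = ∑ j : Fin 3, cind q (true, p ++ [j]) l0
    simp only [cind_true]
    exact ite_prefix_sum (TTree.branch_ne_leaf hp hl0)
  · intro p hp
    show cind q (false, p) l0 = ∑ j : Fin 3, cind q (false, p ++ [j]) l0
    simp only [cind_false]
    exact ite_prefix_sum (TTree.branch_ne_leaf hp (hq.pr_leaf l0 hl0))
  · intro l hl
    show cind q (true, l) l0 = cind q (false, q.pr l) l0
    rw [cind_true, cind_false]
    simp only [prefix_leaf_iff hl hl0, prefix_pr_iff hq hl hl0]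

lemma isDDeco_dco {q : Couple} (hq : q.IsCouple) {l0 : List (Fin 3)}
    (hl0 : q.tp.isLeaf l0) : IsDDeco q (fun x => (dco q x l0 : ℤ)) := by
  refine ⟨?_, ?_, ?_⟩
  · intro p hp
    show nodeSign 1 p • dco q (true, p) l0
        = ∑ j : Fin 3, nodeSign 1 (p ++ [j]) • dco q (true, p ++ [j]) l0
    have key : ∀ r : List (Fin 3), nodeSign 1 r • dco q (true, r) l0
        = nodeSign 1 l0 * (if r <+: l0 then 1 else 0) := by
      intro r
      rw [dco_true, smul_eq_mul, ← mul_assoc, nodeSign_sq (by norm_num), one_mul]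
    rw [key p]
    calc nodeSign 1 l0 * (if p <+: l0 then 1 else 0)
        = nodeSign 1 l0 * ∑ j : Fin 3, (if p ++ [j] <+: l0 then (1 : ℤ) else 0) := by
          rw [← ite_prefix_sum (TTree.branch_ne_leaf hp hl0)]
      _ = ∑ j : Fin 3, nodeSign 1 l0 * (if p ++ [j] <+: l0 then 1 else 0) :=
          Finset.mul_sum _ _ _
      _ = _ := Finset.sum_congr rfl fun j _ => (key (p ++ [j])).symm
  · intro p hp
    show nodeSign (-1) p • dco q (false, p) l0
        = ∑ j : Fin 3, nodeSign (-1) (p ++ [j]) • dco q (false, p ++ [j]) l0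
    have key : ∀ r : List (Fin 3), nodeSign (-1) r • dco q (false, r) l0
        = -(nodeSign 1 l0 * (if r <+: q.pr l0 then 1 else 0)) := by
      intro r
      rw [dco_false, smul_eq_mul, mul_neg, ← mul_assoc, nodeSign_sq (by norm_num), one_mul]
    rw [key p]
    calc -(nodeSign 1 l0 * (if p <+: q.pr l0 then 1 else 0))
        = -(nodeSign 1 l0 * ∑ j : Fin 3, (if p ++ [j] <+: q.pr l0 then (1 : ℤ) else 0)) := by
          rw [← ite_prefix_sum (TTree.branch_ne_leaf hp (hq.pr_leaf l0 hl0))]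
      _ = ∑ j : Fin 3, -(nodeSign 1 l0 * (if p ++ [j] <+: q.pr l0 then 1 else 0)) := by
          rw [Finset.mul_sum, Finset.sum_neg_distrib]
      _ = _ := Finset.sum_congr rfl fun j _ => (key (p ++ [j])).symm
  · intro l hl
    show dco q (true, l) l0 = dco q (false, q.pr l) l0
    rw [dco_true, dco_false]
    have hsp : nodeSign (-1) (q.pr l) = - nodeSign 1 l := by
      have h := hq.sign_pr l hl
      rwa [sign_false, sign_true] at h
    by_cases h : l = l0
    · subst h
      rw [if_pos (List.prefix_refl l), if_pos (List.prefix_refl (q.pr l)), hsp]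
      ring
    · rw [if_neg (fun hc => h ((prefix_leaf_iff hl hl0).1 hc)),
        if_neg (fun hc => h ((prefix_pr_iff hq hl hl0).1 hc))]
      simp

lemma isDDeco_one (q : Couple) : IsDDeco q (fun _ => (1 : ℤ)) := by
  refine ⟨?_, ?_, fun l _ => rfl⟩ <;> intro p hp <;>
    simpa [smul_eq_mul, mul_one] using (nodeSign_children _ p).symm

lemma sum_dco {q : Couple} (hq : q.IsCouple) (x : CNode) (hx : q.isNode x) :
    ∑ l ∈ lvs q, dco q x l = 1 := by
  have h := eval_D hq (isDDeco_one q) x hx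
  simpa [smul_eq_mul, mul_one] using h.symm

lemma conj_iff_cind {q : Couple} {x y : CNode} :
    q.Conj x y ↔ ∀ l, q.tp.isLeaf l → cind q x l = cind q y l := by
  unfold Couple.Conj cind
  constructor
  · intro h l hl
    rcases h l hl with ⟨h1, h2⟩ | ⟨h1, h2⟩ <;> simp [h1, h2]
  · intro h l hl
    have h0 := h l hl
    by_cases hx : x ∈ q.pairSet l <;> by_cases hy : y ∈ q.pairSet l <;>
      simp [hx, hy] at h0 ⊢

/-- Two nodes of a couple are conjugate iff every `𝒟`-decoration
(valued in any additive abelian group) takes equal values at them, iff every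
`𝒞`-decoration takes equal values at them. -/
theorem statement3 (q : Couple) (hq : q.IsCouple) (x y : CNode)
    (hx : q.isNode x) (hy : q.isNode y) :
    (q.Conj x y ↔
      ∀ (G : Type) [AddCommGroup G], ∀ ζ : CNode → G, IsDDeco q ζ → ζ x = ζ y) ∧
    (q.Conj x y ↔
      ∀ (G : Type) [AddCommGroup G], ∀ η : CNode → G, IsCDeco q η → η x = η y) := by
  have hCofConj : q.Conj x y →
      ∀ (G : Type) [AddCommGroup G], ∀ η : CNode → G, IsCDeco q η → η x = η y := by
    intro h G _ η hη
    rw [eval_C hq hη x hx, eval_C hq hη y hy]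
    exact Finset.sum_congr rfl fun l hl => by
      rw [conj_iff_cind.1 h l (mem_lvs.1 hl)]
  have hConjOfC : (∀ (G : Type) [AddCommGroup G], ∀ η : CNode → G, IsCDeco q η → η x = η y)
      → q.Conj x y := by
    intro h
    rw [conj_iff_cind]
    intro l0 hl0
    exact h ℤ (fun z => cind q z l0) (isCDeco_cind hq hl0)
  have hDofConj : q.Conj x y →
      ∀ (G : Type) [AddCommGroup G], ∀ ζ : CNode → G, IsDDeco q ζ → ζ x = ζ y := by
    intro h G _ ζ hζ
    have hind := conj_iff_cind.1 h
    have key : ∀ z : CNode, q.isNode z →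
        (eps z * Couple.sign z) * (∑ l ∈ lvs q, Couple.sign (true, l) * cind q z l) = 1 := by
      intro z hz
      rw [Finset.mul_sum]
      calc ∑ l ∈ lvs q, (eps z * Couple.sign z) * (Couple.sign (true, l) * cind q z l)
          = ∑ l ∈ lvs q, dco q z l :=
            Finset.sum_congr rfl fun l _ => by rw [dco]; ring
        _ = 1 := sum_dco hq z hz
    have hTeq : ∑ l ∈ lvs q, Couple.sign (true, l) * cind q y l
        = ∑ l ∈ lvs q, Couple.sign (true, l) * cind q x l :=
      Finset.sum_congr rfl fun l hl => by rw [hind l (mem_lvs.1 hl)]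
    have hx1 := key x hx
    have hy1 := key y hy
    rw [hTeq] at hy1
    have hab : eps x * Couple.sign x = eps y * Couple.sign y := by
      calc eps x * Couple.sign x
          = (eps x * Couple.sign x) * ((eps y * Couple.sign y)
              * ∑ l ∈ lvs q, Couple.sign (true, l) * cind q x l) := by rw [hy1, mul_one]
        _ = (eps y * Couple.sign y) * ((eps x * Couple.sign x)
              * ∑ l ∈ lvs q, Couple.sign (true, l) * cind q x l) := by ring
        _ = eps y * Couple.sign y := by rw [hx1, mul_one]
    rw [eval_D hq hζ x hx, eval_D hq hζ y hy]
    refine Finset.sum_congr rfl fun l hl => ?_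
    have hd : dco q x l = dco q y l := by
      rw [dco, dco, hind l (mem_lvs.1 hl), hab]
    rw [hd]
  have hConjOfD : (∀ (G : Type) [AddCommGroup G], ∀ ζ : CNode → G, IsDDeco q ζ → ζ x = ζ y)
      → q.Conj x y := by
    intro h
    rw [conj_iff_cind]
    intro l0 hl0
    have h1 := h ℤ (fun z => dco q z l0) (isDDeco_dco hq hl0)
    beta_reduce at h1
    rw [← dco_mul_self q x l0, ← dco_mul_self q y l0, h1]
  exact ⟨⟨hDofConj, hConjOfD⟩, ⟨hCofConj, hConjOfC⟩⟩

end WickNLS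

end
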